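/- Let T be a satisfiable first-order theory in a language L. Then T is stable if and only if for every model M of T, every n, and every ℚ-indexed sequence (a_q), with a_q : Fin n → M, that is order-indiscernible, the sequence is set-indiscernible. -/

import Mathlib

open FirstOrder FirstOrder.Language

universe u v

variable {L : FirstOrder.Language.{u, v}}

/-- An `L`-formula `φ` with free variables in `Fin m ⊕ Fin n` has the order property in an
`L`-structure `M` if there are sequences `a : ℕ → (Fin m → M)` and `b : ℕ → (Fin n → M)`
such that `φ(a i, b j)` holds iff `i ≤ j`. -/
def HasOrderProperty {m n : ℕ} (φ : L.Formula (Fin m ⊕ Fin n))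
    (M : Type w) [L.Structure M] : Prop :=
  ∃ (a : ℕ → Fin m → M) (b : ℕ → Fin n → M),
    ∀ i j : ℕ, φ.Realize (Sum.elim (a i) (b j)) ↔ i ≤ j

/-- A satisfiable `L`-theory `T` is stable if no `L`-formula has the order property in any
model of `T`. -/
def IsStableTheory (T : L.Theory) : Prop :=
  ∀ (m n : ℕ) (φ : L.Formula (Fin m ⊕ Fin n)) (M : Theory.ModelType.{u, v, max u v} T),
    ¬ HasOrderProperty φ M

/-- A `ℚ`-indexed sequence of `n`-tuples of `M` is order-indiscernible if any two strictly
increasing tuples of indices give tuples satisfying the same formulas. -/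
def OrderIndiscernible {M : Type w} [L.Structure M] {n : ℕ} (a : ℚ → Fin n → M) : Prop :=
  ∀ (r : ℕ) (ψ : L.Formula (Fin r × Fin n)) (q q' : Fin r → ℚ),
    StrictMono q → StrictMono q' →
    (ψ.Realize (fun p => a (q p.1) p.2) ↔ ψ.Realize (fun p => a (q' p.1) p.2))

/-- A `ℚ`-indexed sequence of `n`-tuples of `M` is set-indiscernible if any two tuples of
pairwise distinct (not necessarily increasing) indices give tuples satisfying the same
formulas. -/
def SetIndiscernible {M : Type w} [L.Structure M] {n : ℕ} (a : ℚ → Fin n → M) : Prop :=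
  ∀ (r : ℕ) (ψ : L.Formula (Fin r × Fin n)) (q q' : Fin r → ℚ),
    Function.Injective q → Function.Injective q' →
    (ψ.Realize (fun p => a (q p.1) p.2) ↔ ψ.Realize (fun p => a (q' p.1) p.2))


open Filter

namespace MyRamsey

open Classical in
noncomputable def blim (f : ℕ → Bool) : Bool := decide ({x | f x = true} ∈ hyperfilter ℕ)

lemma blim_spec (f : ℕ → Bool) : {x | f x = blim f} ∈ hyperfilter ℕ := by
  by_cases h : {x | f x = true} ∈ hyperfilter ℕ
  · simpa [blim, h] using h
  · have h' : {x | f x = true}ᶜ ∈ hyperfilter ℕ :=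
      Ultrafilter.compl_mem_iff_notMem.2 h
    have : {x | f x = true}ᶜ = {x | f x = false} := by
      ext x; simp [Bool.not_eq_true]
    classical
    simp only [blim, h, decide_false]
    rwa [this] at h'

/-- fuel-indexed iterated ultrafilter limit of a coloring of lists -/
noncomputable def F (χ : List ℕ → Bool) : ℕ → List ℕ → Bool
  | 0, l => χ l
  | (k+1), l => blim (fun x => F χ k (l ++ [x]))

noncomputable def rseq (r : ℕ) (χ : List ℕ → Bool) : ℕ → ℕ
  | t => sInf {y | (∀ s : Fin t, rseq r χ s < y) ∧
      ∀ (j : Fin r) (g : Fin j → Fin t),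
        F χ (r - (j + 1)) ((List.ofFn fun i => rseq r χ (g i)) ++ [y]) =
          F χ (r - j) (List.ofFn fun i => rseq r χ (g i))}
  termination_by t => t
  decreasing_by
  · exact s.2
  · exact (g i).2
  · exact (g i).2

lemma good_mem (r : ℕ) (χ : List ℕ → Bool) (t : ℕ) (prev : Fin t → ℕ) :
    {y | (∀ s : Fin t, prev s < y) ∧
      ∀ (j : Fin r) (g : Fin j → Fin t),
        F χ (r - (j + 1)) ((List.ofFn fun i => prev (g i)) ++ [y]) =
          F χ (r - j) (List.ofFn fun i => prev (g i))} ∈ hyperfilter ℕ := by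
  have h1 : {y | ∀ s : Fin t, prev s < y} ∈ hyperfilter ℕ := by
    have : {y | ∀ s : Fin t, prev s < y} = ⋂ s : Fin t, {y | prev s < y} := by
      ext y; simp
    rw [this]
    refine iInter_mem.2 fun s => hyperfilter_le_cofinite ?_
    have : {y | prev s < y}ᶜ = Set.Iic (prev s) := by ext y; simp [Set.Iic, not_lt]
    simp only [mem_cofinite, this]
    exact Set.finite_Iic _
  have h2 : {y | ∀ (j : Fin r) (g : Fin j → Fin t),
        F χ (r - (j + 1)) ((List.ofFn fun i => prev (g i)) ++ [y]) =
          F χ (r - j) (List.ofFn fun i => prev (g i))} ∈ hyperfilter ℕ := by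
    have : {y | ∀ (j : Fin r) (g : Fin j → Fin t),
        F χ (r - (j + 1)) ((List.ofFn fun i => prev (g i)) ++ [y]) =
          F χ (r - j) (List.ofFn fun i => prev (g i))} =
        ⋂ (p : Σ j : Fin r, (Fin j → Fin t)),
          {y | F χ (r - (p.1 + 1)) ((List.ofFn fun i => prev (p.2 i)) ++ [y]) =
            F χ (r - p.1) (List.ofFn fun i => prev (p.2 i))} := by
      ext y; constructor
      · rintro h S ⟨p, rfl⟩; exact h p.1 p.2
      · intro h j g
        exact Set.mem_iInter.1 h ⟨j, g⟩
    rw [this]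
    refine iInter_mem.2 fun p => ?_
    have hr : r - (p.1 : ℕ) = (r - ((p.1 : ℕ) + 1)) + 1 := by omega
    rw [hr]
    exact blim_spec _
  exact (hyperfilter ℕ).toFilter.inter_sets h1 h2


lemma rseq_spec (r : ℕ) (χ : List ℕ → Bool) (t : ℕ) :
    (∀ s : Fin t, rseq r χ s < rseq r χ t) ∧
      ∀ (j : Fin r) (g : Fin j → Fin t),
        F χ (r - (j + 1)) ((List.ofFn fun i => rseq r χ (g i)) ++ [rseq r χ t]) =
          F χ (r - j) (List.ofFn fun i => rseq r χ (g i)) := by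
  have h := good_mem r χ t (fun s => rseq r χ s)
  have hne := Ultrafilter.nonempty_of_mem h
  rw [rseq]
  exact Nat.sInf_mem hne

lemma rseq_strictMono (r : ℕ) (χ : List ℕ → Bool) : StrictMono (rseq r χ) :=
  fun a b hab => (rseq_spec r χ b).1 ⟨a, hab⟩

lemma rseq_invariant (r : ℕ) (χ : List ℕ → Bool) :
    ∀ j, j ≤ r → ∀ h : Fin j → ℕ, StrictMono h →
      F χ (r - j) (List.ofFn fun i => rseq r χ (h i)) = F χ r [] := by
  intro j
  induction j with
  | zero => intro _ h _; simp
  | succ j ih =>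
    intro hj h hh
    have hcast : StrictMono (fun i : Fin j => h i.castSucc) :=
      fun a b hab => hh (Fin.castSucc_lt_castSucc_iff.2 hab)
    have ihe := ih (le_of_lt hj) _ hcast
    have hlt : ∀ i : Fin j, h i.castSucc < h (Fin.last j) :=
      fun i => hh (Fin.castSucc_lt_last i)
    have hspec := (rseq_spec r χ (h (Fin.last j))).2 ⟨j, hj⟩
      (fun i => ⟨h i.castSucc, hlt i⟩)
    have hofn : (List.ofFn fun i : Fin (j+1) => rseq r χ (h i)) =
        (List.ofFn fun i : Fin j => rseq r χ (h i.castSucc)) ++ [rseq r χ (h (Fin.last j))] := by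
      rw [List.ofFn_succ']
      simp [List.concat_eq_append]
    rw [hofn]
    rw [hspec, ihe]

theorem ramsey_bool (r : ℕ) (χ : (Fin r → ℕ) → Bool) :
    ∃ S : Set ℕ, S.Infinite ∧ ∃ V, ∀ g : Fin r → ℕ, StrictMono g → (∀ i, g i ∈ S) → χ g = V := by
  set χ' : List ℕ → Bool := fun l => χ (fun i => l.getD i 0) with hχ'
  set x := rseq r χ' with hx
  refine ⟨Set.range x, Set.infinite_range_of_injective (rseq_strictMono r χ').injective,
    F χ' r [], ?_⟩
  intro g hg hgS
  choose h hh using hgS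
  have hxh : ∀ i, x (h i) = g i := hh
  have hhmono : StrictMono h := by
    intro a b hab
    have := hg hab
    rw [← hxh a, ← hxh b] at this
    exact (rseq_strictMono r χ').lt_iff_lt.1 this
  have key := rseq_invariant r χ' r le_rfl h hhmono
  have : F χ' 0 (List.ofFn fun i => x (h i)) = F χ' r [] := by
    simpa using key
  have heq : (fun i : Fin r => (List.ofFn fun i => x (h i)).getD i 0) = g := by
    funext i
    rw [List.getD_eq_getElem _ _ (by simp [i.2] : (i : ℕ) < (List.ofFn fun i => x (h i)).length)]
    simp [hxh]
  calc χ g = χ' (List.ofFn fun i => x (h i)) := by rw [hχ']; simp only [heq]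
    _ = F χ' r [] := this


theorem ramsey_bool_rel (r : ℕ) (χ : (Fin r → ℕ) → Bool) (S : Set ℕ) (hS : S.Infinite) :
    ∃ S' : Set ℕ, S' ⊆ S ∧ S'.Infinite ∧
      ∃ V, ∀ g : Fin r → ℕ, StrictMono g → (∀ i, g i ∈ S') → χ g = V := by
  classical
  haveI : Infinite S := hS.to_subtype
  let e : ℕ ↪o ℕ := Nat.orderEmbeddingOfSet S
  have heS : ∀ t, e t ∈ S := fun t => (Nat.Subtype.ofNat S t).2
  obtain ⟨T, hTinf, V, hV⟩ := ramsey_bool r (fun g => χ (fun i => e (g i)))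
  refine ⟨e '' T, ?_, hTinf.image (e.injective.injOn), V, ?_⟩
  · rintro y ⟨t, _, rfl⟩; exact heS t
  · intro g hg hgS
    choose h hhT hhe using hgS
    have hhmono : StrictMono h := by
      intro a b hab
      have := hg hab
      rw [← hhe a, ← hhe b] at this
      exact e.lt_iff_lt.1 this
    have := hV h hhmono hhT
    convert this using 2
    funext i
    rw [hhe]

theorem ramsey_family {ι : Type*} (K : ι → ℕ) (χ : ∀ i, (Fin (K i) → ℕ) → Bool)
    (s : Finset ι) :
    ∃ S : Set ℕ, S.Infinite ∧
      ∀ i ∈ s, ∃ V, ∀ g : Fin (K i) → ℕ, StrictMono g → (∀ p, g p ∈ S) → χ i g = V := by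
  classical
  induction s using Finset.induction with
  | empty => exact ⟨Set.univ, Set.infinite_univ, by simp⟩
  | @insert i₀ s₀ hi ih =>
    obtain ⟨S, hSinf, hS⟩ := ih
    obtain ⟨S', hS'sub, hS'inf, V, hV⟩ := ramsey_bool_rel (K i₀) (χ i₀) S hSinf
    refine ⟨S', hS'inf, ?_⟩
    intro i hi'
    rcases Finset.mem_insert.1 hi' with rfl | hmem
    · exact ⟨V, hV⟩
    · obtain ⟨V', hV'⟩ := hS i hmem
      exact ⟨V', fun g hg hgS => hV' g hg (fun p => hS'sub (hgS p))⟩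

end MyRamsey


namespace MyPerm

variable {r : ℕ}

open Finset

def invs (σ : Equiv.Perm (Fin r)) : Finset (Fin r × Fin r) :=
  Finset.univ.filter (fun p => p.1 < p.2 ∧ σ p.2 < σ p.1)

lemma eq_one_of_invs_empty (σ : Equiv.Perm (Fin r)) (h : invs σ = ∅) : σ = 1 := by
  have hmono : Monotone σ := by
    intro i j hij
    rcases eq_or_lt_of_le hij with rfl | hlt
    · exact le_rfl
    · by_contra hc
      have : (i, j) ∈ invs σ := by
        simp [invs, hlt, lt_of_not_ge hc]
      simp [h] at this
  have hsm : StrictMono σ := hmono.strictMono_of_injective σ.injective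
  refine Equiv.ext fun i => ?_
  have helim := Subsingleton.elim (StrictMono.orderIsoOfSurjective σ hsm σ.surjective)
    (OrderIso.refl (Fin r))
  have h2 : StrictMono.orderIsoOfSurjective σ hsm σ.surjective i = σ i := rfl
  rw [helim] at h2
  exact h2.symm.trans rfl

lemma exists_descent (σ : Equiv.Perm (Fin r)) (h : invs σ ≠ ∅) :
    ∃ (k : ℕ) (hk : k + 1 < r), σ ⟨k + 1, hk⟩ < σ ⟨k, by omega⟩ := by
  by_contra hc
  push_neg at hc
  apply h
  rw [Finset.eq_empty_iff_forall_notMem]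
  rintro ⟨i, j⟩ hmem
  simp only [invs, Finset.mem_filter] at hmem
  obtain ⟨-, hij, hσ⟩ := hmem
  have hmono : Monotone σ := by
    rcases r with - | n
    · exact fun a => Fin.elim0 a
    · refine Fin.monotone_iff_le_succ.2 fun t => ?_
      have h1 : Fin.castSucc t = (⟨t.1, by omega⟩ : Fin (n + 1)) := rfl
      have h2 : t.succ = (⟨t.1 + 1, by omega⟩ : Fin (n + 1)) := rfl
      rw [h1, h2]
      exact hc t.1 (by omega)
  exact absurd (hmono hij.le) (not_le.2 hσ)

lemma invs_swap_lt (σ : Equiv.Perm (Fin r)) (k : ℕ) (hk : k + 1 < r)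
    (hd : σ ⟨k + 1, hk⟩ < σ ⟨k, by omega⟩) :
    (invs (σ * Equiv.swap ⟨k, by omega⟩ ⟨k + 1, hk⟩)).card < (invs σ).card := by
  set a : Fin r := ⟨k, by omega⟩ with ha
  set b : Fin r := ⟨k + 1, hk⟩ with hb
  set τ := Equiv.swap a b with hτdef
  have hτa : τ a = b := Equiv.swap_apply_left a b
  have hτb : τ b = a := Equiv.swap_apply_right a b
  have hτo : ∀ x, x ≠ a → x ≠ b → τ x = x := fun x h1 h2 => Equiv.swap_apply_of_ne_of_ne h1 h2
  have hmem : (a, b) ∈ invs σ := by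
    refine Finset.mem_filter.2 ⟨Finset.mem_univ _, ?_, hd⟩
    rw [Fin.lt_def]; simp [ha, hb]
  have hmaps : ∀ p ∈ invs (σ * τ), (τ p.1, τ p.2) ∈ (invs σ).erase (a, b) := by
    rintro ⟨i, j⟩ hp
    rw [invs, Finset.mem_filter] at hp
    simp only [Finset.mem_univ, true_and, Equiv.Perm.mul_apply] at hp
    obtain ⟨hij, hσp⟩ := hp
    have hne : (i, j) ≠ (a, b) := by
      intro hc
      obtain ⟨h1, h2⟩ := Prod.ext_iff.1 hc
      dsimp at h1 h2; subst h1; subst h2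
      rw [hτa, hτb] at hσp
      exact absurd hd (not_lt.2 hσp.le)
    have hτij : τ i < τ j := by
      rcases eq_or_ne i a with rfl | hia
      · rcases eq_or_ne j b with rfl | hjb
        · exact absurd rfl hne
        · have hja : j ≠ a := fun h => absurd (h ▸ hij) (lt_irrefl _)
          rw [hτa, hτo j hja hjb]
          rw [Fin.lt_def] at hij ⊢
          have hv : j.1 ≠ k + 1 := fun h => hjb (Fin.ext h)
          simp only [ha, hb] at *
          omega
      · rcases eq_or_ne i b with rfl | hib
        · have hja : j ≠ a := by
            intro h
            rw [h, Fin.lt_def] at hij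
            simp only [ha, hb] at hij
            omega
          have hjb : j ≠ b := fun h => absurd (h ▸ hij) (lt_irrefl _)
          rw [hτb, hτo j hja hjb]
          rw [Fin.lt_def] at hij ⊢
          simp only [ha, hb] at *
          omega
        · rw [hτo i hia hib]
          rcases eq_or_ne j a with rfl | hja
          · rw [hτa]
            rw [Fin.lt_def] at hij ⊢
            simp only [ha, hb] at *
            omega
          · rcases eq_or_ne j b with rfl | hjb
            · rw [hτb]
              rw [Fin.lt_def] at hij ⊢
              have hv : i.1 ≠ k := fun h => hia (Fin.ext h)
              simp only [ha, hb] at *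
              omega
            · rw [hτo j hja hjb]; exact hij
    refine Finset.mem_erase.2 ⟨?_, ?_⟩
    · intro hc
      obtain ⟨h1, h2⟩ := Prod.ext_iff.1 hc
      dsimp at h1 h2
      have hi : i = b := by
        have := congrArg τ h1
        rwa [Equiv.swap_apply_self, hτa] at this
      have hj : j = a := by
        have := congrArg τ h2
        rwa [Equiv.swap_apply_self, hτb] at this
      rw [hi, hj, Fin.lt_def] at hij
      simp only [ha, hb] at hij
      omega
    · exact Finset.mem_filter.2 ⟨Finset.mem_univ _, hτij, hσp⟩
  have hinj : Set.InjOn (fun p : Fin r × Fin r => (τ p.1, τ p.2)) (invs (σ * τ)) := by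
    rintro ⟨i, j⟩ - ⟨i', j'⟩ - hc
    obtain ⟨h1, h2⟩ := Prod.ext_iff.1 hc
    dsimp at h1 h2
    exact Prod.ext (τ.injective h1) (τ.injective h2)
  calc (invs (σ * τ)).card ≤ ((invs σ).erase (a, b)).card :=
        Finset.card_le_card_of_injOn _ hmaps hinj
    _ < (invs σ).card := Finset.card_erase_lt_of_mem hmem

lemma perm_induction (P : Equiv.Perm (Fin r) → Prop) (h1 : P 1)
    (hmul : ∀ σ τ, P σ → P τ → P (σ * τ))
    (hswap : ∀ (k : ℕ) (hk : k + 1 < r), P (Equiv.swap ⟨k, by omega⟩ ⟨k + 1, hk⟩)) :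
    ∀ σ, P σ := by
  intro σ
  generalize hN : (invs σ).card = N
  induction N using Nat.strong_induction_on generalizing σ with
  | _ N ih =>
    rcases eq_or_ne (invs σ) ∅ with he | hne
    · rw [eq_one_of_invs_empty σ he]; exact h1
    · obtain ⟨k, hk, hd⟩ := exists_descent σ hne
      set τ := Equiv.swap (⟨k, by omega⟩ : Fin r) ⟨k + 1, hk⟩ with hτ
      have hlt := invs_swap_lt σ k hk hd
      have hP1 : P (σ * τ) := ih _ (hN ▸ hlt) _ rfl
      have : (σ * τ) * τ = σ := by
        rw [mul_assoc, hτ, Equiv.swap_mul_self, mul_one]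
      rw [← this]
      exact hmul _ _ hP1 (hswap k hk)

end MyPerm


namespace MyFwd

-- the interleaving rationals
noncomputable def gseq (k : ℕ) (c : ℕ) : ℚ := (k : ℚ) + 1 - 1 / (c + 2)

lemma gseq_strictMono (k : ℕ) : StrictMono (gseq k) := by
  intro c c' h
  have h1 : (0 : ℚ) < (c : ℚ) + 2 := by positivity
  have h2 : (c : ℚ) + 2 < (c' : ℚ) + 2 := by
    have : (c : ℚ) < c' := by exact_mod_cast h
    linarith
  have := one_div_lt_one_div_of_lt h1 h2
  unfold gseq; linarith

lemma gseq_gt (k c : ℕ) : (k : ℚ) < gseq k c := by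
  have h1 : (0 : ℚ) < (c : ℚ) + 2 := by positivity
  have : (1 : ℚ) / ((c : ℚ) + 2) < 1 := by
    rw [div_lt_one h1]; linarith
  unfold gseq; linarith

lemma gseq_lt (k c : ℕ) : gseq k c < (k : ℚ) + 1 := by
  have : (0 : ℚ) < 1 / ((c : ℚ) + 2) := by positivity
  unfold gseq; linarith

/-- the tuple with values `u, v` in slots `k, k+1` and `t` elsewhere -/
def wtuple (r k : ℕ) (u v : ℚ) : Fin r → ℚ :=
  fun t => if t.1 = k then u else if t.1 = k + 1 then v else (t.1 : ℚ)

lemma wtuple_strictMono {r k : ℕ} {u v : ℚ} (hu1 : (k : ℚ) < u) (hu2 : u < k + 1)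
    (hv1 : (k : ℚ) < v) (hv2 : v < k + 1) (huv : u < v) :
    StrictMono (wtuple r k u v) := by
  intro t t' hlt
  rw [Fin.lt_def] at hlt
  unfold wtuple
  rcases eq_or_ne t.1 k with h1 | h1 <;> rcases eq_or_ne t'.1 k with h1' | h1'
  · exact absurd hlt (by omega)
  · rcases eq_or_ne t'.1 (k + 1) with h2' | h2'
    · simp only [if_pos h1, if_neg h1', if_pos h2']
      exact huv
    · have hge : k + 2 ≤ t'.1 := by omega
      have : ((k : ℚ)) + 2 ≤ (t'.1 : ℚ) := by exact_mod_cast hge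
      simp only [if_pos h1, if_neg h1', if_neg h2']
      linarith
  · -- t' at slot k, t below
    have htk : t.1 < k := by omega
    have h2 : t.1 ≠ k + 1 := by omega
    have : (t.1 : ℚ) < (k : ℚ) := by exact_mod_cast htk
    simp only [if_neg h1, if_neg h2, if_pos h1']
    linarith
  · rcases eq_or_ne t.1 (k + 1) with h2 | h2 <;> rcases eq_or_ne t'.1 (k + 1) with h2' | h2'
    · exact absurd hlt (by omega)
    · have hge : k + 2 ≤ t'.1 := by omega
      have : ((k : ℚ)) + 2 ≤ (t'.1 : ℚ) := by exact_mod_cast hge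
      simp only [if_neg h1, if_pos h2, if_neg h1', if_neg h2']
      linarith
    · have htk : t.1 < k := by omega
      have : (t.1 : ℚ) < (k : ℚ) := by exact_mod_cast htk
      simp only [if_neg h1, if_neg h2, if_neg h1', if_pos h2']
      linarith
    · have : (t.1 : ℚ) < (t'.1 : ℚ) := by exact_mod_cast hlt
      simp only [if_neg h1, if_neg h2, if_neg h1', if_neg h2']
      linarith

lemma wtuple_swap {r k : ℕ} (hk : k + 1 < r) (u v : ℚ) :
    wtuple r k u v = (wtuple r k v u) ∘ (Equiv.swap (⟨k, by omega⟩ : Fin r) ⟨k + 1, hk⟩) := by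
  funext t
  set a : Fin r := ⟨k, by omega⟩
  set b : Fin r := ⟨k + 1, hk⟩
  rcases eq_or_ne t a with rfl | hta
  · simp only [Function.comp_apply, Equiv.swap_apply_left]
    unfold wtuple
    simp [a, b]
  · rcases eq_or_ne t b with rfl | htb
    · simp only [Function.comp_apply, Equiv.swap_apply_right]
      unfold wtuple
      simp [a, b]
    · simp only [Function.comp_apply, Equiv.swap_apply_of_ne_of_ne hta htb]
      unfold wtuple
      have h1 : t.1 ≠ k := fun h => hta (Fin.ext h)
      have h2 : t.1 ≠ k + 1 := fun h => htb (Fin.ext h)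
      simp [h1, h2]


open FirstOrder FirstOrder.Language

variable {L : FirstOrder.Language.{u, v}}

theorem swap_ok {T : L.Theory} (hS : IsStableTheory T)
    (M : Theory.ModelType.{u, v, max u v} T)
    {n : ℕ} (a : ℚ → Fin n → M) (hOI : OrderIndiscernible (L := L) a)
    {r : ℕ} (k : ℕ) (hk : k + 1 < r) (ψ : L.Formula (Fin r × Fin n)) (q : Fin r → ℚ)
    (hq : StrictMono q) :
    (ψ.Realize (fun p => a (q ((Equiv.swap (⟨k, by omega⟩ : Fin r) ⟨k + 1, hk⟩) p.1)) p.2) ↔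
      ψ.Realize (fun p => a (q p.1) p.2)) := by
  classical
  by_contra hcon
  set τ := Equiv.swap (⟨k, by omega⟩ : Fin r) ⟨k + 1, hk⟩ with hτ
  obtain ⟨ψ', h1, h2⟩ : ∃ ψ' : L.Formula (Fin r × Fin n),
      ψ'.Realize (fun p => a (q p.1) p.2) ∧
        ¬ ψ'.Realize (fun p => a (q (τ p.1)) p.2) := by
    rcases Classical.em (ψ.Realize (fun p => a (q p.1) p.2)) with hx | hx
    · rcases Classical.em (ψ.Realize (fun p => a (q (τ p.1)) p.2)) with hy | hy
      · exact absurd (iff_of_true hy hx) hcon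
      · exact ⟨ψ, hx, hy⟩
    · rcases Classical.em (ψ.Realize (fun p => a (q (τ p.1)) p.2)) with hy | hy
      · refine ⟨ψ.not, ?_, ?_⟩
        · rw [Formula.realize_not]; exact hx
        · rw [Formula.realize_not]; exact not_not_intro hy
      · exact absurd (iff_of_false hy hx) hcon
  set xq : ℕ → ℚ := fun i => gseq k (2 * i) with hxq
  set yq : ℕ → ℚ := fun j => gseq k (2 * j + 1) with hyq
  have horder : ∀ i j : ℕ, xq i < yq j ↔ i ≤ j := by
    intro i j
    rw [hxq, hyq]
    rw [(gseq_strictMono k).lt_iff_lt]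
    omega
  have horder2 : ∀ i j : ℕ, j < i → yq j < xq i := by
    intro i j hji
    rw [hxq, hyq]
    exact gseq_strictMono k (by omega)
  set G : Fin r × Fin n → Fin n ⊕ Fin (r * n) :=
    fun p => if p.1.1 = k then Sum.inl p.2 else Sum.inr (finProdFinEquiv p) with hG
  set φ₀ : L.Formula (Fin n ⊕ Fin (r * n)) := ψ'.relabel G with hφ₀
  set A : ℕ → Fin n → M := fun i => a (xq i) with hA
  set B : ℕ → Fin (r * n) → M := fun j v =>
    a ((wtuple r k 0 (yq j)) (finProdFinEquiv.symm v).1) ((finProdFinEquiv.symm v).2) with hB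
  have hkey : ∀ i j : ℕ, (φ₀.Realize (Sum.elim (A i) (B j)) ↔
      ψ'.Realize (fun p => a (wtuple r k (xq i) (yq j) p.1) p.2)) := by
    intro i j
    rw [hφ₀, Formula.realize_relabel]
    have : (Sum.elim (A i) (B j)) ∘ G = fun p => a (wtuple r k (xq i) (yq j) p.1) p.2 := by
      funext p
      by_cases hp : p.1.1 = k
      · simp only [hG, Function.comp_apply, if_pos hp, Sum.elim_inl, hA]
        unfold wtuple
        rw [if_pos hp]
      · simp only [hG, Function.comp_apply, if_neg hp, Sum.elim_inr, hB,
          Equiv.symm_apply_apply]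
        unfold wtuple
        rw [if_neg hp, if_neg hp]
    rw [this]
  have hOP : ∀ i j : ℕ, (φ₀.Realize (Sum.elim (A i) (B j)) ↔ i ≤ j) := by
    intro i j
    rw [hkey i j]
    rcases le_or_gt i j with hij | hji
    · have hw : StrictMono (wtuple r k (xq i) (yq j)) :=
        wtuple_strictMono (gseq_gt k _) (gseq_lt k _) (gseq_gt k _) (gseq_lt k _)
          ((horder i j).2 hij)
      rw [hOI r ψ' _ q hw hq]
      exact iff_of_true h1 hij
    · have hw : StrictMono (wtuple r k (yq j) (xq i)) :=
        wtuple_strictMono (gseq_gt k _) (gseq_lt k _) (gseq_gt k _) (gseq_lt k _)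
          (horder2 i j hji)
      set ψ'' : L.Formula (Fin r × Fin n) :=
        ψ'.relabel (fun p : Fin r × Fin n => (τ p.1, p.2)) with hψ''
      have e1 : (ψ''.Realize (fun p => a ((wtuple r k (yq j) (xq i)) p.1) p.2) ↔
          ψ'.Realize (fun p => a ((wtuple r k (yq j) (xq i)) ((τ p.1 : Fin r))) p.2)) := by
        rw [hψ'', Formula.realize_relabel]
        exact Iff.rfl
      have e2 : (ψ''.Realize (fun p => a (q p.1) p.2) ↔
          ψ'.Realize (fun p => a (q (τ p.1)) p.2)) := by
        rw [hψ'', Formula.realize_relabel]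
        exact Iff.rfl
      have hchain := (e1.symm.trans (hOI r ψ'' _ q hw hq)).trans e2
      have hfun : (fun p : Fin r × Fin n => a (wtuple r k (xq i) (yq j) p.1) p.2) =
          (fun p => a (wtuple r k (yq j) (xq i) (τ p.1)) p.2) := by
        funext p
        rw [wtuple_swap hk (xq i) (yq j)]
        rfl
      rw [hfun, hchain]
      exact iff_of_false h2 (by omega)
  exact hS n (r * n) φ₀ M ⟨A, B, hOP⟩


theorem perm_ok {T : L.Theory} (hS : IsStableTheory T)
    (M : Theory.ModelType.{u, v, max u v} T)
    {n : ℕ} (a : ℚ → Fin n → M) (hOI : OrderIndiscernible (L := L) a)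
    {r : ℕ} (σ : Equiv.Perm (Fin r)) (ψ : L.Formula (Fin r × Fin n)) (q : Fin r → ℚ)
    (hq : StrictMono q) :
    (ψ.Realize (fun p => a (q (σ p.1)) p.2) ↔ ψ.Realize (fun p => a (q p.1) p.2)) := by
  revert ψ q
  refine MyPerm.perm_induction
    (fun σ => ∀ (ψ : L.Formula (Fin r × Fin n)) (q : Fin r → ℚ), StrictMono q →
      (ψ.Realize (fun p => a (q (σ p.1)) p.2) ↔ ψ.Realize (fun p => a (q p.1) p.2)))
    ?_ ?_ ?_ σ
  · intro ψ q _
    exact Iff.rfl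
  · intro σ τ hPσ hPτ ψ q hq
    have e1 : (ψ.Realize (fun p => a (q ((σ * τ) p.1)) p.2) ↔
        (ψ.relabel (fun p : Fin r × Fin n => (τ p.1, p.2))).Realize
          (fun p => a (q (σ p.1)) p.2)) := by
      rw [Formula.realize_relabel]
      exact Iff.rfl
    have e2 := hPσ (ψ.relabel (fun p : Fin r × Fin n => (τ p.1, p.2))) q hq
    have e3 : ((ψ.relabel (fun p : Fin r × Fin n => (τ p.1, p.2))).Realize
        (fun p => a (q p.1) p.2) ↔ ψ.Realize (fun p => a (q (τ p.1)) p.2)) := by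
      rw [Formula.realize_relabel]
      exact Iff.rfl
    exact ((e1.trans e2).trans e3).trans (hPτ ψ q hq)
  · intro k hk ψ q hq
    exact swap_ok hS M a hOI k hk ψ q hq

theorem fwd {T : L.Theory} (hS : IsStableTheory T) :
    ∀ (M : Theory.ModelType.{u, v, max u v} T) (n : ℕ) (a : ℚ → Fin n → M),
      OrderIndiscernible (L := L) a → SetIndiscernible (L := L) a := by
  intro M n a hOI r ψ q q' hq hq'
  have key : ∀ u : Fin r → ℚ, Function.Injective u →
      ∃ w : Fin r → ℚ, StrictMono w ∧
        (ψ.Realize (fun p => a (u p.1) p.2) ↔ ψ.Realize (fun p => a (w p.1) p.2)) := by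
    intro u hu
    set σ := Tuple.sort u with hσ
    have hmono : Monotone (u ∘ σ) := Tuple.monotone_sort u
    have hsm : StrictMono (u ∘ σ) := hmono.strictMono_of_injective (hu.comp σ.injective)
    refine ⟨u ∘ σ, hsm, ?_⟩
    have hp := perm_ok hS M a hOI σ⁻¹ ψ (u ∘ σ) hsm
    have hfix : (fun p : Fin r × Fin n => a ((u ∘ σ) (σ⁻¹ p.1)) p.2) =
        (fun p => a (u p.1) p.2) := by
      funext p
      simp only [Function.comp_apply, Equiv.Perm.coe_inv, Equiv.apply_symm_apply]
    rw [hfix] at hp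
    exact hp
  obtain ⟨w, hw, e⟩ := key q hq
  obtain ⟨w', hw', e'⟩ := key q' hq'
  exact (e.trans (hOI r ψ w w' hw hw')).trans e'.symm


end MyFwd


namespace MyBwd

variable {L : FirstOrder.Language.{u, v}}

/-- term naming the constant for `(q, k)` -/
noncomputable def axq (N : ℕ) (r : ℕ) (ψ : L.Formula (Fin r × Fin N)) (q : Fin r → ℚ) :
    (L[[ℚ × Fin N]]).Sentence :=
  ((L.lhomWithConstants (ℚ × Fin N)).onFormula ψ).subst
    (fun p => ((L.con (q p.1, p.2)).term))

noncomputable def ordax (N : ℕ) (φ' : L.Formula (Fin N ⊕ Fin N)) (s t : ℚ) :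
    (L[[ℚ × Fin N]]).Sentence :=
  ((L.lhomWithConstants (ℚ × Fin N)).onFormula φ').subst
    (Sum.elim (fun k => ((L.con (s, k)).term)) (fun k => ((L.con (t, k)).term)))

variable {N : ℕ} {M : Type w} [L.Structure M] [(L[[ℚ × Fin N]]).Structure M]
  [(L.lhomWithConstants (ℚ × Fin N)).IsExpansionOn M]

lemma realize_axq {r : ℕ} (ψ : L.Formula (Fin r × Fin N)) (q : Fin r → ℚ) :
    (M ⊨ axq N r ψ q) ↔
      ψ.Realize (fun p : Fin r × Fin N =>
        ((L.con (q p.1, p.2) : (L[[ℚ × Fin N]]).Constants) : M)) := by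
  unfold axq
  calc (M ⊨ axq N r ψ q) ↔ ((L.lhomWithConstants (ℚ × Fin N)).onFormula ψ).Realize
        (fun p : Fin r × Fin N => ((L.con (q p.1, p.2)).term.realize (default : Empty → M))) :=
      BoundedFormula.realize_subst
    _ ↔ ψ.Realize (fun p : Fin r × Fin N =>
        ((L.con (q p.1, p.2)).term.realize (default : Empty → M))) :=
      LHom.realize_onFormula _ _
    _ ↔ _ := by simp only [Term.realize_constants]

lemma realize_ordax (φ' : L.Formula (Fin N ⊕ Fin N)) (s t : ℚ) :
    (M ⊨ ordax N φ' s t) ↔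
      φ'.Realize (Sum.elim (fun k => ((L.con (s, k) : (L[[ℚ × Fin N]]).Constants) : M))
        (fun k => ((L.con (t, k) : (L[[ℚ × Fin N]]).Constants) : M))) := by
  unfold ordax
  calc (M ⊨ ordax N φ' s t) ↔ ((L.lhomWithConstants (ℚ × Fin N)).onFormula φ').Realize
        (fun p : Fin N ⊕ Fin N => ((Sum.elim (fun k : Fin N => ((L.con (s, k)).term))
          (fun k : Fin N => ((L.con (t, k)).term)) p).realize (default : Empty → M))) :=
      BoundedFormula.realize_subst
    _ ↔ φ'.Realize (fun p : Fin N ⊕ Fin N => ((Sum.elim (fun k : Fin N => ((L.con (s, k)).term))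
          (fun k : Fin N => ((L.con (t, k)).term)) p).realize (default : Empty → M))) :=
      LHom.realize_onFormula _ _
    _ ↔ _ := by
      constructor <;> intro h <;> convert h using 1 <;>
        · funext x
          cases x <;> simp [Term.realize_constants]

/-- index of an indiscernibility axiom -/
def IndIdx (L : FirstOrder.Language.{u, v}) (N : ℕ) :=
  Σ r : ℕ, L.Formula (Fin r × Fin N) × (Fin r → ℚ) × (Fin r → ℚ)

noncomputable def indSen {N : ℕ} (i : IndIdx L N) : (L[[ℚ × Fin N]]).Sentence :=
  (axq N i.1 i.2.1 i.2.2.1).iff (axq N i.1 i.2.1 i.2.2.2)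

noncomputable def ordSen (N : ℕ) (φ' : L.Formula (Fin N ⊕ Fin N)) (st : ℚ × ℚ) :
    (L[[ℚ × Fin N]]).Sentence :=
  if st.1 ≤ st.2 then ordax N φ' st.1 st.2 else (ordax N φ' st.1 st.2).not

noncomputable def bigTheory (T : L.Theory) (N : ℕ) (φ' : L.Formula (Fin N ⊕ Fin N)) :
    (L[[ℚ × Fin N]]).Theory :=
  (L.lhomWithConstants (ℚ × Fin N)).onTheory T ∪
    {s | ∃ i : IndIdx L N, StrictMono i.2.2.1 ∧ StrictMono i.2.2.2 ∧ s = indSen i} ∪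
    {s | ∃ st : ℚ × ℚ, s = ordSen N φ' st}


theorem bigTheory_isSatisfiable {T : L.Theory} {N : ℕ} (φ' : L.Formula (Fin N ⊕ Fin N))
    (M₀ : Theory.ModelType.{u, v, max u v} T) (c : ℕ → Fin N → M₀)
    (hc : ∀ i j : ℕ, φ'.Realize (Sum.elim (c i) (c j)) ↔ i ≤ j) :
    (bigTheory T N φ').IsSatisfiable := by
  classical
  rw [Theory.isSatisfiable_iff_isFinitelySatisfiable]
  intro T0 hT0
  set P2 : (L[[ℚ × Fin N]]).Sentence → Prop := fun s =>
    ∃ i : IndIdx L N, StrictMono i.2.2.1 ∧ StrictMono i.2.2.2 ∧ s = indSen i with hP2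
  set P3 : (L[[ℚ × Fin N]]).Sentence → Prop := fun s =>
    ∃ st : ℚ × ℚ, s = ordSen N φ' st with hP3
  set FQ : Finset ℚ := T0.biUnion (fun s =>
    if h2 : P2 s then (Finset.image h2.choose.2.2.1 Finset.univ ∪
      Finset.image h2.choose.2.2.2 Finset.univ)
    else if h3 : P3 s then {h3.choose.1, h3.choose.2} else ∅) with hFQ
  set Fψ : Finset (Σ r : ℕ, L.Formula (Fin r × Fin N)) := T0.biUnion (fun s =>
    if h2 : P2 s then {⟨h2.choose.1, h2.choose.2.1⟩} else ∅) with hFψ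
  obtain ⟨S, hSinf, hHom⟩ := MyRamsey.ramsey_family
    (ι := Σ r : ℕ, L.Formula (Fin r × Fin N)) (fun i => i.1)
    (fun i g => decide (i.2.Realize (fun p => c (g p.1) p.2))) Fψ
  haveI : Infinite S := hSinf.to_subtype
  set e : ℕ ↪o ℕ := Nat.orderEmbeddingOfSet S with he
  have heS : ∀ t, e t ∈ S := fun t => (Nat.Subtype.ofNat S t).2
  set h : ℚ → ℕ :=
    fun x => if hx : x ∈ FQ then e ((FQ.orderIsoOfFin rfl).symm ⟨x, hx⟩) else e 0 with hh
  have hmono : ∀ x ∈ FQ, ∀ y ∈ FQ, x < y → h x < h y := by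
    intro x hx y hy hxy
    rw [hh]
    simp only [dif_pos hx, dif_pos hy]
    apply e.strictMono
    have : (FQ.orderIsoOfFin rfl).symm ⟨x, hx⟩ < (FQ.orderIsoOfFin rfl).symm ⟨y, hy⟩ :=
      (OrderIso.lt_iff_lt _).2 (Subtype.mk_lt_mk.2 hxy)
    exact_mod_cast this
  have hmonole : ∀ x ∈ FQ, ∀ y ∈ FQ, x ≤ y → h x ≤ h y := by
    intro x hx y hy hxy
    rcases eq_or_lt_of_le hxy with rfl | hlt
    · exact le_rfl
    · exact (hmono x hx y hy hlt).le
  have hhS : ∀ x, h x ∈ S := by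
    intro x
    rw [hh]
    dsimp only
    split_ifs
    exacts [heS _, heS _]
  letI : (constantsOn (ℚ × Fin N)).Structure M₀ :=
    constantsOn.structure (fun p => c (h p.1) p.2)
  letI : (L[[ℚ × Fin N]]).Structure M₀ :=
    inferInstanceAs ((L.sum (constantsOn (ℚ × Fin N))).Structure M₀)
  haveI : (L.lhomWithConstants (ℚ × Fin N)).IsExpansionOn M₀ :=
    ⟨fun f x => rfl, fun R x => rfl⟩
  have hreal : ∀ s ∈ T0, M₀ ⊨ s := by
    intro s hs
    by_cases h2 : P2 s
    · obtain ⟨hq, hq', hseq⟩ := h2.choose_spec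
      have hmemψ : (⟨h2.choose.1, h2.choose.2.1⟩ : Σ r : ℕ, L.Formula (Fin r × Fin N)) ∈ Fψ := by
        rw [hFψ]
        refine Finset.mem_biUnion.2 ⟨s, hs, ?_⟩
        rw [dif_pos h2]
        simp
      have hmemq : ∀ t, h2.choose.2.2.1 t ∈ FQ := by
        intro t
        rw [hFQ]
        refine Finset.mem_biUnion.2 ⟨s, hs, ?_⟩
        rw [dif_pos h2]
        exact Finset.mem_union_left _ (Finset.mem_image_of_mem _ (Finset.mem_univ t))
      have hmemq' : ∀ t, h2.choose.2.2.2 t ∈ FQ := by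
        intro t
        rw [hFQ]
        refine Finset.mem_biUnion.2 ⟨s, hs, ?_⟩
        rw [dif_pos h2]
        exact Finset.mem_union_right _ (Finset.mem_image_of_mem _ (Finset.mem_univ t))
      obtain ⟨V, hV⟩ := hHom _ hmemψ
      have hg1 : StrictMono (fun t => h (h2.choose.2.2.1 t)) :=
        fun t t' htt => hmono _ (hmemq t) _ (hmemq t') (hq htt)
      have hg2 : StrictMono (fun t => h (h2.choose.2.2.2 t)) :=
        fun t t' htt => hmono _ (hmemq' t) _ (hmemq' t') (hq' htt)
      have hV1 := hV _ hg1 (fun p => hhS _)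
      have hV2 := hV _ hg2 (fun p => hhS _)
      have hiff : (h2.choose.2.1.Realize
            (fun p => c (h (h2.choose.2.2.1 p.1)) p.2) ↔
          h2.choose.2.1.Realize (fun p => c (h (h2.choose.2.2.2 p.1)) p.2)) :=
        decide_eq_decide.1 (hV1.trans hV2.symm)
      rw [hseq]
      unfold indSen
      rw [Sentence.Realize, Formula.realize_iff]
      exact (realize_axq _ _).trans (hiff.trans (realize_axq _ _).symm)
    · by_cases h3 : P3 s
      · have hseq := h3.choose_spec
        have hm1 : h3.choose.1 ∈ FQ := by
          rw [hFQ]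
          refine Finset.mem_biUnion.2 ⟨s, hs, ?_⟩
          rw [dif_neg h2, dif_pos h3]
          simp
        have hm2 : h3.choose.2 ∈ FQ := by
          rw [hFQ]
          refine Finset.mem_biUnion.2 ⟨s, hs, ?_⟩
          rw [dif_neg h2, dif_pos h3]
          simp
        have hre := (realize_ordax (M := M₀) φ' h3.choose.1 h3.choose.2)
        have hfuneq : (Sum.elim
              (fun k : Fin N => ((L.con ((h3.choose.1 : ℚ), k) :
                (L[[ℚ × Fin N]]).Constants) : M₀))
              (fun k : Fin N => ((L.con ((h3.choose.2 : ℚ), k) :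
                (L[[ℚ × Fin N]]).Constants) : M₀))) =
            Sum.elim (c (h h3.choose.1)) (c (h h3.choose.2)) := by
          funext x
          cases x <;> rfl
        rw [hfuneq] at hre
        rw [hseq]
        unfold ordSen
        split_ifs with hle
        · exact hre.2 ((hc _ _).2 (hmonole _ hm1 _ hm2 hle))
        · rw [Sentence.Realize, Formula.realize_not]
          intro hcontra
          have hcd := (hc (h h3.choose.1) (h h3.choose.2)).1 (hre.1 hcontra)
          have hlt := hmono _ hm2 _ hm1 (lt_of_not_ge hle)
          omega
      · rcases hT0 hs with (hmem | hmem) | hmem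
        · obtain ⟨s₀, hs₀, rfl⟩ := hmem
          have hros := LHom.realize_onSentence (M := M₀) (L.lhomWithConstants (ℚ × Fin N)) s₀
          exact hros.2 (T.realize_sentence_of_mem hs₀)
        · exact absurd hmem h2
        · exact absurd hmem h3
  haveI : M₀ ⊨ (↑T0 : (L[[ℚ × Fin N]]).Theory) :=
    (Theory.model_iff (↑T0 : (L[[ℚ × Fin N]]).Theory)).2
      (fun φ hφ => hreal φ (Finset.mem_coe.1 hφ))
  exact ⟨Theory.ModelType.of _ M₀⟩


theorem exists_indisc_model {T : L.Theory} {N : ℕ} (φ' : L.Formula (Fin N ⊕ Fin N))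
    (hsat : (bigTheory T N φ').IsSatisfiable) :
    ∃ (M : Theory.ModelType.{u, v, max u v} T) (d : ℚ → Fin N → M),
      OrderIndiscernible (L := L) d ∧
        ∀ s t : ℚ, (φ'.Realize (Sum.elim (d s) (d t)) ↔ s ≤ t) := by
  obtain ⟨M'⟩ := hsat
  haveI hmod : M' ⊨ (L.lhomWithConstants (ℚ × Fin N)).onTheory T :=
    Theory.Model.mono M'.is_model (fun s hs => Set.mem_union_left _ (Set.mem_union_left _ hs))
  letI : L.Structure M' := (L.lhomWithConstants (ℚ × Fin N)).reduct M'
  haveI : (L.lhomWithConstants (ℚ × Fin N)).IsExpansionOn M' :=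
    LHom.isExpansionOn_reduct (L.lhomWithConstants (ℚ × Fin N)) M'
  haveI hTmod : M' ⊨ T := (LHom.onTheory_model (L.lhomWithConstants (ℚ × Fin N)) T).1 hmod
  refine ⟨Theory.ModelType.of T M', fun q k =>
    ((L.con (q, k) : (L[[ℚ × Fin N]]).Constants) : M'), ?_, ?_⟩
  · intro r ψ q q' hq hq'
    have hax : M' ⊨ indSen (⟨r, ψ, q, q'⟩ : IndIdx L N) :=
      Theory.realize_sentence_of_mem (bigTheory T N φ')
        (Set.mem_union_left _ (Set.mem_union_right _ ⟨⟨r, ψ, q, q'⟩, hq, hq', rfl⟩))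
    unfold indSen at hax
    rw [Sentence.Realize, Formula.realize_iff] at hax
    exact ((realize_axq (M := M') ψ q).symm.trans hax).trans (realize_axq (M := M') ψ q')
  · intro s t
    have hax : M' ⊨ ordSen N φ' (s, t) :=
      Theory.realize_sentence_of_mem (bigTheory T N φ')
        (Set.mem_union_right _ ⟨(s, t), rfl⟩)
    unfold ordSen at hax
    by_cases hle : s ≤ t
    · rw [if_pos hle] at hax
      exact iff_of_true ((realize_ordax (M := M') φ' s t).1 hax) hle
    · rw [if_neg hle] at hax
      rw [Sentence.Realize, Formula.realize_not] at hax
      exact iff_of_false (fun hcon => hax ((realize_ordax (M := M') φ' s t).2 hcon)) hle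

theorem bwd {T : L.Theory}
    (hyp : ∀ (M : Theory.ModelType.{u, v, max u v} T) (n : ℕ) (a : ℚ → Fin n → M),
      OrderIndiscernible (L := L) a → SetIndiscernible (L := L) a) :
    IsStableTheory T := by
  intro m n φ M₀ hOP
  obtain ⟨a, b, hab⟩ := hOP
  classical
  set c : ℕ → Fin (m + n) → M₀ := fun i => Fin.append (a i) (b i) with hcdef
  set φ' : L.Formula (Fin (m + n) ⊕ Fin (m + n)) :=
    φ.relabel (Sum.map (Fin.castAdd n) (Fin.natAdd m)) with hφ'def
  have hc : ∀ i j : ℕ, φ'.Realize (Sum.elim (c i) (c j)) ↔ i ≤ j := by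
    intro i j
    rw [hφ'def, Formula.realize_relabel]
    have hfe : (Sum.elim (c i) (c j)) ∘ (Sum.map (Fin.castAdd n) (Fin.natAdd m)) =
        Sum.elim (a i) (b j) := by
      funext x
      cases x with
      | inl k => simp [hcdef, Fin.append_left]
      | inr k => simp [hcdef, Fin.append_right]
    rw [hfe, hab]
  have hsat := bigTheory_isSatisfiable φ' M₀ c hc
  obtain ⟨M, d, hOI, hord⟩ := exists_indisc_model φ' hsat
  have hSI := hyp M (m + n) d hOI
  set ψ₂ : L.Formula (Fin 2 × Fin (m + n)) :=
    φ'.relabel (Sum.elim (fun k => (((0 : Fin 2), k) : Fin 2 × Fin (m + n)))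
      (fun k => ((1 : Fin 2), k))) with hψ₂
  have hinj0 : Function.Injective (![(0 : ℚ), 1]) := by
    intro i j hij
    fin_cases i <;> fin_cases j <;> simp_all <;> norm_num at hij
  have hinj1 : Function.Injective (![(1 : ℚ), 0]) := by
    intro i j hij
    fin_cases i <;> fin_cases j <;> simp_all <;> norm_num at hij
  have h01 := hSI 2 ψ₂ ![(0 : ℚ), 1] ![(1 : ℚ), 0] hinj0 hinj1
  have e0 : (ψ₂.Realize (fun p => d (![(0 : ℚ), 1] p.1) p.2) ↔
      φ'.Realize (Sum.elim (d 0) (d 1))) := by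
    rw [hψ₂, Formula.realize_relabel]
    have hfe : (fun p : Fin 2 × Fin (m + n) => d (![(0 : ℚ), 1] p.1) p.2) ∘
        (Sum.elim (fun k => (((0 : Fin 2), k) : Fin 2 × Fin (m + n)))
          (fun k => ((1 : Fin 2), k))) = Sum.elim (d 0) (d 1) := by
      funext x
      cases x <;> simp
    rw [hfe]
  have e1 : (ψ₂.Realize (fun p => d (![(1 : ℚ), 0] p.1) p.2) ↔
      φ'.Realize (Sum.elim (d 1) (d 0))) := by
    rw [hψ₂, Formula.realize_relabel]
    have hfe : (fun p : Fin 2 × Fin (m + n) => d (![(1 : ℚ), 0] p.1) p.2) ∘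
        (Sum.elim (fun k => (((0 : Fin 2), k) : Fin 2 × Fin (m + n)))
          (fun k => ((1 : Fin 2), k))) = Sum.elim (d 1) (d 0) := by
      funext x
      cases x <;> simp
    rw [hfe]
  have h10 : φ'.Realize (Sum.elim (d 1) (d 0)) :=
    e1.1 (h01.1 (e0.2 ((hord 0 1).2 (by norm_num))))
  exact absurd ((hord 1 0).1 h10) (by norm_num)

end MyBwd

/-- A satisfiable theory `T` is stable if and only if, in every model of `T`, every
order-indiscernible `ℚ`-indexed sequence of `n`-tuples is set-indiscernible. -/
theorem isStableTheory_iff_orderIndiscernible_setIndiscernible (T : L.Theory)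
    (hT : T.IsSatisfiable) :
    IsStableTheory T ↔
      ∀ (M : Theory.ModelType.{u, v, max u v} T) (n : ℕ) (a : ℚ → Fin n → M),
        OrderIndiscernible (L := L) a → SetIndiscernible (L := L) a := by
  constructor
  · exact fun hS => MyFwd.fwd hS
  · exact fun hyp => MyBwd.bwd hyp
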